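/- Let α be a real number and (c_n)_{n≥1} a sequence of positive integers such that c_n divides c_{n+1} for all n ≥ 1, with q_n, a_n, A_n the data of the generalized alternating-Sylvester expansion of α. For every n ≥ 1 with A_{n+1} ≠ 0: (i) a_{n+1} ≥ (c_{n+1}/c_n) · a_n · (a_n + 1); and (ii) if equality a_{n+1} = (c_{n+1}/c_n) · a_n · (a_n + 1) holds, then q_{n+2} ≠ 0. -/

import Mathlib

open Filter Topology

/-- The rational value `c/⌊c/x⌋` used at each step (0 if `x = 0`). -/
noncomputable def gasQaux (cn : ℕ) (x : ℝ) : ℝ :=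
  if x = 0 then 0 else (cn : ℝ) / (⌊(cn : ℝ) / x⌋ : ℝ)

/-- `gasA c α n` is `A_n` of the generalized alternating-Sylvester expansion of `α`
(for `n ≥ 1`; the value at `0` is a dummy). `A_1 = α - ⌊α⌋`, `A_{n+1} = q_n - A_n`. -/
noncomputable def gasA (c : ℕ → ℕ) (α : ℝ) : ℕ → ℝ
  | 0 => 0
  | 1 => α - ⌊α⌋
  | n + 2 => gasQaux (c (n + 1)) (gasA c α (n + 1)) - gasA c α (n + 1)

/-- `gasQ c α n` is `q_n`: `q_0 = ⌊α⌋`; for `n ≥ 1`, `q_n = c_n / a_n` if `A_n ≠ 0`, else `0`. -/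
noncomputable def gasQ (c : ℕ → ℕ) (α : ℝ) : ℕ → ℝ
  | 0 => (⌊α⌋ : ℤ)
  | n + 1 => gasQaux (c (n + 1)) (gasA c α (n + 1))

/-- `gasa c α n` is `a_n = ⌊c_n / A_n⌋` (meaningful when `A_n ≠ 0`). -/
noncomputable def gasa (c : ℕ → ℕ) (α : ℝ) (n : ℕ) : ℤ :=
  ⌊(c n : ℝ) / gasA c α n⌋

lemma gas_step (cn : ℕ) (hcn : 0 < cn) (x : ℝ) (hx0 : 0 < x) (hx1 : x < 1) :
    (cn : ℤ) ≤ ⌊(cn:ℝ)/x⌋ ∧ (cn:ℝ)/((⌊(cn:ℝ)/x⌋:ℝ)+1) < x ∧ x ≤ (cn:ℝ)/(⌊(cn:ℝ)/x⌋:ℝ) := by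
  have hcr : (0:ℝ) < cn := by exact_mod_cast hcn
  have h1 : (cn:ℝ) ≤ (cn:ℝ)/x := by
    rw [le_div_iff₀ hx0]; nlinarith
  have ha : (cn : ℤ) ≤ ⌊(cn:ℝ)/x⌋ := Int.le_floor.mpr (by push_cast; exact h1)
  have har : (cn:ℝ) ≤ (⌊(cn:ℝ)/x⌋:ℝ) := by exact_mod_cast ha
  have ha0 : (0:ℝ) < (⌊(cn:ℝ)/x⌋:ℝ) := lt_of_lt_of_le hcr har
  have h2 : (cn:ℝ)/x < (⌊(cn:ℝ)/x⌋:ℝ) + 1 := Int.lt_floor_add_one _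
  have h3 : (⌊(cn:ℝ)/x⌋:ℝ) ≤ (cn:ℝ)/x := Int.floor_le _
  refine ⟨ha, ?_, ?_⟩
  · rw [div_lt_iff₀ (by linarith)]
    rw [div_lt_iff₀ hx0] at h2; linarith
  · rw [le_div_iff₀ ha0]
    rw [le_div_iff₀ hx0] at h3; linarith

lemma gasA_mem (c : ℕ → ℕ) (hc : ∀ n, 1 ≤ n → 0 < c n) (α : ℝ) :
    ∀ n, 1 ≤ n → 0 ≤ gasA c α n ∧ gasA c α n < 1 := by
  intro n
  induction n with
  | zero => intro h; omega
  | succ m ih =>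
    intro _
    rcases Nat.eq_zero_or_pos m with rfl | hm
    · have h1 := Int.floor_le α
      have h2 := Int.lt_floor_add_one α
      constructor
      · simp only [gasA]; linarith
      · simp only [gasA]; linarith
    · obtain ⟨k, rfl⟩ : ∃ k, m = k + 1 := ⟨m - 1, by omega⟩
      have ihm := ih (by omega)
      have hunfold : gasA c α (k+1+1) = gasQaux (c (k+1)) (gasA c α (k+1)) - gasA c α (k+1) := rfl
      by_cases h0 : gasA c α (k+1) = 0
      · rw [hunfold]; simp [gasQaux, h0]
      · have hx0 : 0 < gasA c α (k+1) := lt_of_le_of_ne ihm.1 (Ne.symm h0)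
        have hcn := hc (k+1) (by omega)
        obtain ⟨ha, h2, h3⟩ := gas_step (c (k+1)) hcn _ hx0 ihm.2
        rw [hunfold, gasQaux, if_neg h0]
        set a : ℝ := (⌊(c (k+1):ℝ)/(gasA c α (k+1))⌋ : ℝ) with hadef
        have hcr : (0:ℝ) < c (k+1) := by exact_mod_cast hcn
        have h1r : (1:ℝ) ≤ c (k+1) := by exact_mod_cast hcn
        have hcna : ((c (k+1)):ℝ) ≤ a := by rw [hadef]; exact_mod_cast ha
        have ha1 : (1:ℝ) ≤ a := le_trans h1r hcna
        constructor
        · linarith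
        · -- c/a - x < c/(a(a+1)) ≤ 1
          have ha0 : (0:ℝ) < a := by linarith
          have key : (c (k+1):ℝ)/a - gasA c α (k+1) < (c (k+1):ℝ)/(a*(a+1)) := by
            have : (c (k+1):ℝ)/a - (c (k+1):ℝ)/(a+1) = (c (k+1):ℝ)/(a*(a+1)) := by
              field_simp; ring
            linarith
          have hle : (c (k+1):ℝ)/(a*(a+1)) ≤ 1 := by
            rw [div_le_one (by nlinarith)]
            nlinarith
          linarith

lemma gasA_bound (c : ℕ → ℕ) (hc : ∀ n, 1 ≤ n → 0 < c n) (α : ℝ) (n : ℕ) (hn : 1 ≤ n)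
    (h0 : gasA c α n ≠ 0) :
    gasA c α (n+1) = (c n : ℝ)/((gasa c α n : ℝ)) - gasA c α n ∧
    (c n : ℝ) ≤ (gasa c α n : ℝ) ∧
    gasA c α (n+1) < (c n : ℝ)/((gasa c α n : ℝ) * ((gasa c α n : ℝ)+1)) := by
  obtain ⟨m, rfl⟩ : ∃ m, n = m + 1 := ⟨n - 1, by omega⟩
  have hmem := gasA_mem c hc α (m+1) (by omega)
  have hx0 : 0 < gasA c α (m+1) := lt_of_le_of_ne hmem.1 (Ne.symm h0)
  have hcn := hc (m+1) (by omega)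
  obtain ⟨ha, h2, h3⟩ := gas_step (c (m+1)) hcn _ hx0 hmem.2
  have heq : gasA c α (m+1+1) = (c (m+1):ℝ)/((gasa c α (m+1) : ℝ)) - gasA c α (m+1) := by
    show gasQaux (c (m+1)) (gasA c α (m+1)) - gasA c α (m+1) = _
    rw [gasQaux, if_neg h0, gasa]
  have har : (c (m+1):ℝ) ≤ (gasa c α (m+1) : ℝ) := by exact_mod_cast ha
  refine ⟨heq, har, ?_⟩
  set a : ℝ := (gasa c α (m+1) : ℝ)
  have ha0 : (0:ℝ) < a := lt_of_lt_of_le (by exact_mod_cast hcn) har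
  have hsplit : (c (m+1):ℝ)/a - (c (m+1):ℝ)/(a+1) = (c (m+1):ℝ)/(a*(a+1)) := by
    field_simp; ring
  rw [heq]
  have h2' : (c (m+1):ℝ)/(a+1) < gasA c α (m+1) := h2
  linarith

/-- If $c_n \mid c_{n+1}$ for all $n$, then for every $n \ge 1$ with $A_{n+1} \neq 0$:
(i) $a_{n+1} \ge (c_{n+1}/c_n) a_n (a_n+1)$;
(ii) if equality holds then $q_{n+2} \neq 0$. -/
theorem gas_growth_dvd (c : ℕ → ℕ) (hc : ∀ n, 1 ≤ n → 0 < c n)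
    (hdvd : ∀ n, 1 ≤ n → c n ∣ c (n + 1)) (α : ℝ) :
    ∀ n, 1 ≤ n → gasA c α (n + 1) ≠ 0 →
      ((c (n + 1) : ℝ) / (c n : ℝ)) * (gasa c α n : ℝ) * ((gasa c α n : ℝ) + 1) ≤
          (gasa c α (n + 1) : ℝ) ∧
        ((gasa c α (n + 1) : ℝ) =
            ((c (n + 1) : ℝ) / (c n : ℝ)) * (gasa c α n : ℝ) * ((gasa c α n : ℝ) + 1) →
          gasQ c α (n + 2) ≠ 0) := by
  intro n hn hA1
  obtain ⟨m, rfl⟩ : ∃ m, n = m + 1 := ⟨n - 1, by omega⟩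
  have hAn : gasA c α (m+1) ≠ 0 := by
    intro h
    apply hA1
    show gasQaux (c (m+1)) (gasA c α (m+1)) - gasA c α (m+1) = 0
    simp [gasQaux, h]
  obtain ⟨heq, har, hlt⟩ := gasA_bound c hc α (m+1) (by omega) hAn
  set a : ℝ := (gasa c α (m+1) : ℝ) with hadef
  have hcn := hc (m+1) (by omega)
  have hcn1 := hc (m+2) (by omega)
  have hcr : (0:ℝ) < c (m+1) := by exact_mod_cast hcn
  have hcr1 : (0:ℝ) < c (m+2) := by exact_mod_cast hcn1
  have ha0 : (0:ℝ) < a := lt_of_lt_of_le hcr har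
  obtain ⟨k, hk⟩ := hdvd (m+1) (by omega)
  have hk0 : 0 < k := by
    rcases Nat.eq_zero_or_pos k with rfl | h; · simp [hk] at hcn1
    · exact h
  have hratio : (c (m+2) : ℝ) / (c (m+1) : ℝ) = (k : ℝ) := by
    rw [hk]; push_cast; field_simp
  have hmem1 := gasA_mem c hc α (m+2) (by omega)
  have hx1 : 0 < gasA c α (m+2) := lt_of_le_of_ne hmem1.1 (Ne.symm hA1)
  -- c_{n+1}/A_{n+1} > k * a * (a+1)
  have hkaa : ((k : ℝ) * a * (a+1)) < (c (m+2):ℝ) / gasA c α (m+2) := by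
    rw [lt_div_iff₀ hx1]
    have haa : (0:ℝ) < a * (a+1) := by nlinarith
    have := mul_lt_mul_of_pos_left hlt (by positivity : (0:ℝ) < (k:ℝ) * (a*(a+1)))
    calc (k:ℝ) * a * (a+1) * gasA c α (m+2)
        < (k:ℝ) * (a*(a+1)) * ((c (m+1):ℝ)/(a*(a+1))) := by
          rw [mul_assoc ((k:ℝ)) a (a+1)] at *; linarith [this]
      _ = (c (m+2):ℝ) := by rw [hk]; push_cast; field_simp
  -- a_{n+1} ≥ k * a_n * (a_n + 1)
  have hint : ((k : ℤ) * (gasa c α (m+1)) * (gasa c α (m+1) + 1)) ≤ gasa c α (m+2) := by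
    apply Int.le_floor.mpr
    push_cast
    exact le_of_lt hkaa
  have hintr : (k:ℝ) * a * (a+1) ≤ (gasa c α (m+2) : ℝ) := by rw [hadef]; exact_mod_cast hint
  rw [hratio]
  refine ⟨hintr, ?_⟩
  intro heqcase hq0
  -- q_{n+2} = 0 case analysis
  have hA2eq := heqcase
  by_cases h2 : gasA c α (m+3) = 0
  · -- A_{n+2} = 0 forces A_{n+1} = c_{n+1}/a_{n+1} = c_n/(a(a+1)), contradiction with hlt
    have heq2 : gasA c α (m+3) = (c (m+2):ℝ)/((gasa c α (m+2):ℝ)) - gasA c α (m+2) := by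
      show gasQaux (c (m+2)) (gasA c α (m+2)) - gasA c α (m+2) = _
      rw [gasQaux, if_neg hA1, gasa]
    rw [heq2] at h2
    have : gasA c α (m+2) = (c (m+2):ℝ)/((gasa c α (m+2):ℝ)) := by linarith [sub_eq_zero.mp h2]
    rw [this, heqcase] at hlt
    have hkr : (k:ℝ) ≠ 0 := by exact_mod_cast hk0.ne'
    have haa0 : a ≠ 0 := ne_of_gt ha0
    have haa1 : a + 1 ≠ 0 := by positivity
    have hval : (c (m+2):ℝ)/((k:ℝ) * a * (a+1)) = (c (m+1):ℝ)/(a*(a+1)) := by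
      rw [hk]; push_cast; field_simp
    rw [hval] at hlt
    exact lt_irrefl _ hlt
  · -- A_{n+2} ≠ 0: q_{n+2} = c_{n+2}/a_{n+2} > 0
    have hmem2 := gasA_mem c hc α (m+3) (by omega)
    have hx2 : 0 < gasA c α (m+3) := lt_of_le_of_ne hmem2.1 (Ne.symm h2)
    have hcn2 := hc (m+3) (by omega)
    obtain ⟨ha2, _, _⟩ := gas_step (c (m+3)) hcn2 _ hx2 hmem2.2
    have : gasQ c α (m+1+2) = (c (m+3):ℝ)/((⌊(c (m+3):ℝ)/(gasA c α (m+3))⌋:ℝ)) := by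
      show gasQaux (c (m+3)) (gasA c α (m+3)) = _
      rw [gasQaux, if_neg h2]
    rw [this] at hq0
    have hfr : (0:ℝ) < (⌊(c (m+3):ℝ)/(gasA c α (m+3))⌋:ℝ) := by
      calc (0:ℝ) < (c (m+3):ℝ) := by exact_mod_cast hcn2
        _ ≤ _ := by exact_mod_cast ha2
    have : (0:ℝ) < (c (m+3):ℝ)/((⌊(c (m+3):ℝ)/(gasA c α (m+3))⌋:ℝ)) :=
      div_pos (by exact_mod_cast hcn2) hfr
    rw [hq0] at this
    exact lt_irrefl _ this
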